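/- Let σ = {λ_n : n ∈ ℕ} be a strictly increasing unbounded sequence of positive reals and γ_n > 0 with ∑ γ_n λ_n^k e^{−t/(2λ_n)} < ∞ for all k, t. Define Δ_{l,k}(t) = ∑_{J ⊂ ℕ, |J| = k} (∏_{j∈J} γ_j λ_j^l) (∏_{i<j∈J}(λ_i−λ_j)²) exp(−(t/2) ∑_{j∈J} 1/λ_j). Then as t → −∞, Δ_{l,k}(t) ∼ (∏_{j=1}^k γ_j λ_j^l)(∏_{1≤i<j≤k}(λ_i−λ_j)²) exp(−(t/2) ∑_{j=1}^k 1/λ_j), i.e. the term indexed by J = {1,…,k} dominates. -/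

import Mathlib

open Filter

lemma aux_le_orderEmbOfFin {k : ℕ} (J : Finset ℕ) (hJ : J.card = k) (i : Fin k) :
    (i : ℕ) ≤ J.orderEmbOfFin hJ i := by
  have hg : StrictMono (J.orderEmbOfFin hJ) := (J.orderEmbOfFin hJ).strictMono
  have : ∀ m : ℕ, ∀ hm : m < k, m ≤ J.orderEmbOfFin hJ ⟨m, hm⟩ := by
    intro m
    induction m with
    | zero => intro hm; exact Nat.zero_le _
    | succ n ih =>
      intro hm
      have hn : n < k := Nat.lt_of_succ_lt hm
      have h1 := ih hn
      have h2 : J.orderEmbOfFin hJ ⟨n, hn⟩ < J.orderEmbOfFin hJ ⟨n + 1, hm⟩ :=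
        hg (by simp [Fin.lt_def])
      omega
  exact this i i.isLt

lemma aux_sum_lt_sum_range {f : ℕ → ℝ} (hf : StrictAnti f) {k : ℕ} {J : Finset ℕ}
    (hJ : J.card = k) (hne : J ≠ Finset.range k) :
    ∑ j ∈ J, f j < ∑ j ∈ Finset.range k, f j := by
  classical
  set g := J.orderEmbOfFin hJ with hgdef
  have hginj : Function.Injective fun i : Fin k => (g i : ℕ) := g.injective
  have himg : Finset.image (fun i : Fin k => (g i : ℕ)) Finset.univ = J := by
    apply Finset.coe_injective
    rw [Finset.coe_image, Finset.coe_univ, Set.image_univ]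
    exact J.range_orderEmbOfFin hJ
  have hs1 : ∑ j ∈ J, f j = ∑ i : Fin k, f (g i) := by
    rw [← himg, Finset.sum_image (fun a _ b _ h => hginj h)]
  have hs2 : ∑ j ∈ Finset.range k, f j = ∑ i : Fin k, f (i : ℕ) := by
    rw [Fin.sum_univ_eq_sum_range]
  rw [hs1, hs2]
  have hle : ∀ i : Fin k, (i : ℕ) ≤ g i := aux_le_orderEmbOfFin J hJ
  have hex : ∃ i : Fin k, (i : ℕ) < g i := by
    by_contra h
    push_neg at h
    have heq : ∀ i : Fin k, (g i : ℕ) = i := fun i => le_antisymm (h i) (hle i)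
    apply hne
    apply Finset.eq_of_subset_of_card_le
    · intro j hj
      have : j ∈ Finset.image (fun i : Fin k => (g i : ℕ)) Finset.univ := himg ▸ hj
      obtain ⟨i, _, hi⟩ := Finset.mem_image.1 this
      rw [Finset.mem_range]
      rw [← hi, heq i]
      exact i.isLt
    · rw [Finset.card_range, hJ]
  obtain ⟨i0, hi0⟩ := hex
  exact Finset.sum_lt_sum (fun i _ => hf.antitone (hle i)) ⟨i0, Finset.mem_univ _, hf hi0⟩

/-- For a discrete spectral measure with positive masses `γ_n` at strictly increasing
positive points `λ_n → ∞`, the Hankel-type sum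
`Δ_{l,k}(t) = ∑_{|J| = k} (∏_{j∈J} γ_j λ_j^l)(∏_{i<j∈J}(λ_i-λ_j)²) e^{-(t/2)∑_{j∈J} 1/λ_j}`
is, as `t → -∞`, asymptotically equal to the single term indexed by the set of the `k`
smallest indices `J = {0, …, k-1}` (i.e. the ratio tends to `1`). -/
theorem stmt7 (lam γ : ℕ → ℝ) (hpos : ∀ n, 0 < lam n) (hmono : StrictMono lam)
    (htop : Tendsto lam atTop atTop) (hγ : ∀ n, 0 < γ n) (l : ℤ) (k : ℕ)
    (term : Finset ℕ → ℝ → ℝ)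
    (hterm : ∀ (J : Finset ℕ) (t : ℝ), term J t =
      (∏ j ∈ J, γ j * lam j ^ l) *
        (∏ p ∈ (J ×ˢ J).filter (fun p => p.1 < p.2), (lam p.1 - lam p.2) ^ 2) *
        Real.exp (-(t / 2) * ∑ j ∈ J, 1 / lam j))
    (hsum : ∀ t : ℝ, Summable fun J : {J : Finset ℕ // J.card = k} => term J.1 t) :
    Tendsto
      (fun t : ℝ =>
        (∑' J : {J : Finset ℕ // J.card = k}, term J.1 t) / term (Finset.range k) t)
      atBot (nhds 1) := by
  classical
  set c : Finset ℕ → ℝ := fun J =>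
    (∏ j ∈ J, γ j * lam j ^ l) *
      (∏ p ∈ (J ×ˢ J).filter (fun p => p.1 < p.2), (lam p.1 - lam p.2) ^ 2) with hc
  set w : Finset ℕ → ℝ := fun J => ∑ j ∈ J, 1 / lam j with hw
  have hterm' : ∀ J t, term J t = c J * Real.exp (-(t / 2) * w J) := hterm
  -- positivity of c
  have hcpos : ∀ J : Finset ℕ, 0 < c J := by
    intro J
    apply mul_pos
    · apply Finset.prod_pos
      intro j _
      exact mul_pos (hγ j) (zpow_pos (hpos j) l)
    · apply Finset.prod_pos
      intro p hp
      have hlt : p.1 < p.2 := (Finset.mem_filter.1 hp).2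
      have : lam p.1 - lam p.2 ≠ 0 := sub_ne_zero.2 (ne_of_lt (hmono hlt))
      positivity
  have htermpos : ∀ J t, 0 < term J t := by
    intro J t
    rw [hterm']
    exact mul_pos (hcpos J) (Real.exp_pos _)
  -- strict antitone of 1/lam
  have hanti : StrictAnti fun n => 1 / lam n := by
    intro a b hab
    exact one_div_lt_one_div_of_lt (hpos a) (hmono hab)
  -- w is maximized at range k
  have hwlt : ∀ J : Finset ℕ, J.card = k → J ≠ Finset.range k →
      w J < w (Finset.range k) :=
    fun J hJ hne => aux_sum_lt_sum_range hanti hJ hne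
  set J0 : {J : Finset ℕ // J.card = k} := ⟨Finset.range k, Finset.card_range k⟩ with hJ0
  have hwle : ∀ J : {J : Finset ℕ // J.card = k}, w J.1 ≤ w (Finset.range k) := by
    intro J
    rcases eq_or_ne J.1 (Finset.range k) with h | h
    · rw [h]
    · exact (hwlt J.1 J.2 h).le
  -- ratio formula
  have hratio : ∀ (J : Finset ℕ) (t : ℝ),
      term J t / term (Finset.range k) t =
        c J / c (Finset.range k) *
          Real.exp (-(t / 2) * (w J - w (Finset.range k))) := by
    intro J t
    rw [hterm', hterm', mul_div_mul_comm, ← Real.exp_sub]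
    congr 1
    ring
  -- rewrite target as tsum of ratios
  have hrew : (fun t : ℝ =>
      (∑' J : {J : Finset ℕ // J.card = k}, term J.1 t) / term (Finset.range k) t) =
      fun t : ℝ => ∑' J : {J : Finset ℕ // J.card = k},
        term J.1 t / term (Finset.range k) t := by
    funext t
    exact tsum_div_const.symm
  rw [hrew]
  have hgoal : (1 : ℝ) = ∑' J : {J : Finset ℕ // J.card = k},
      (if J = J0 then (1 : ℝ) else 0) := by
    rw [tsum_ite_eq J0 (fun _ => (1 : ℝ))]
  rw [hgoal]
  apply tendsto_tsum_of_dominated_convergence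
    (bound := fun J : {J : Finset ℕ // J.card = k} => term J.1 0 / term (Finset.range k) 0)
  · exact (hsum 0).div_const _
  · intro J
    rcases eq_or_ne J J0 with h | h
    · subst h
      simp only [if_pos rfl]
      have : (fun t : ℝ => term ((J0 : {J : Finset ℕ // J.card = k}) : Finset ℕ) t /
          term (Finset.range k) t) = fun _ : ℝ => (1 : ℝ) := by
        funext t
        exact div_self (ne_of_gt (htermpos _ t))
      rw [this]
      exact tendsto_const_nhds
    · rw [if_neg h]
      have hJne : J.1 ≠ Finset.range k := by
        intro hh
        exact h (Subtype.ext hh)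
      have hd : w J.1 - w (Finset.range k) < 0 :=
        sub_neg.2 (hwlt J.1 J.2 hJne)
      have h1 : Tendsto (fun t : ℝ => -(t / 2)) atBot atTop := by
        have : Tendsto (fun t : ℝ => t / 2) atBot atBot :=
          tendsto_id.atBot_div_const (by norm_num)
        exact tendsto_neg_atBot_atTop.comp this
      have h2 : Tendsto (fun t : ℝ => -(t / 2) * (w J.1 - w (Finset.range k)))
          atBot atBot := h1.atTop_mul_const_of_neg hd
      have h3 : Tendsto (fun t : ℝ =>
          Real.exp (-(t / 2) * (w J.1 - w (Finset.range k)))) atBot (nhds 0) :=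
        Real.tendsto_exp_atBot.comp h2
      have h4 := h3.const_mul (c J.1 / c (Finset.range k))
      rw [mul_zero] at h4
      have : (fun t : ℝ => term J.1 t / term (Finset.range k) t) =
          fun t : ℝ => c J.1 / c (Finset.range k) *
            Real.exp (-(t / 2) * (w J.1 - w (Finset.range k))) := by
        funext t; exact hratio J.1 t
      rw [this]
      exact h4
  · filter_upwards [eventually_le_atBot (0 : ℝ)] with t ht J
    have hnonneg : 0 ≤ term J.1 t / term (Finset.range k) t :=
      le_of_lt (div_pos (htermpos _ t) (htermpos _ t))
    rw [Real.norm_of_nonneg hnonneg, hratio, hratio]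
    apply mul_le_mul_of_nonneg_left _ (le_of_lt (div_pos (hcpos _) (hcpos _)))
    apply Real.exp_le_exp.2
    have hdle : w J.1 - w (Finset.range k) ≤ 0 := sub_nonpos.2 (hwle J)
    have ht2 : 0 ≤ -(t / 2) := by linarith
    nlinarith
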